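/- Assume q = 0, the support of ν is contained in [0, +∞), and ∫_{[1,∞)} y ν(dy) < ∞. Assume further there exist ρ > 1 and a function M varying slowly at 0 such that ∫_{(0,x]} y² ν(dy) / (x^ρ M(x)) → 1 as x → 0⁺. Then for every constant c > 0 one has limsup_{z→∞} ( ln z − c · J′(z) ) = +∞. -/

import Mathlib

open MeasureTheory

/-- The topological support of a measure on `ℝ`. -/
def measureSupport (ν : Measure ℝ) : Set ℝ :=
  {x : ℝ | ∀ U : Set ℝ, IsOpen U → x ∈ U → ν U ≠ 0}

/-- The derivative of the Laplace exponent: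
`J′(z) = −a + qz + ∫ y (𝟙_{(−1,1)}(y) − e^{−zy}) ν(dy)`. -/
noncomputable def Jprime (ν : Measure ℝ) (a q : ℝ) (z : ℝ) : ℝ :=
  -a + q * z + ∫ y, y * ((Set.Ioo (-1 : ℝ) 1).indicator 1 y - Real.exp (-(z * y))) ∂ν

open Filter Set in
lemma aux_null_Iio (ν : Measure ℝ) (hsupp : measureSupport ν ⊆ Set.Ici 0) :
    ν (Set.Iio 0) = 0 := by
  apply measure_null_of_locally_null
  intro x hx
  have hx' : x ∉ measureSupport ν := by
    intro h
    exact absurd (hsupp h) (not_le.2 (by simpa using hx))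
  simp only [measureSupport, Set.mem_setOf_eq] at hx'
  push_neg at hx'
  obtain ⟨U, hU, hxU, hνU⟩ := hx'
  exact ⟨U, nhdsWithin_le_nhds (hU.mem_nhds hxU), hνU⟩

open Filter Set in
lemma aux_eventually_Ioc {p : ℝ → Prop} (h : ∀ᶠ x in nhdsWithin 0 (Set.Ioi 0), p x) :
    ∃ δ : ℝ, 0 < δ ∧ ∀ x, 0 < x → x ≤ δ → p x := by
  rw [eventually_iff, mem_nhdsGT_iff_exists_Ioc_subset] at h
  obtain ⟨u, hu, hsub⟩ := h
  exact ⟨u, hu, fun x hx hxu => hsub ⟨hx, hxu⟩⟩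

open Filter Set in
set_option maxHeartbeats 2000000 in
lemma aux_finite_lint (ν : Measure ℝ)
    (hν : ∫⁻ y, ENNReal.ofReal (min (y ^ 2) 1) ∂ν < ⊤)
    (ρ : ℝ) (hρ : 1 < ρ)
    (M : ℝ → ℝ) (hMpos : ∀ x : ℝ, 0 < x → 0 < M x)
    (hMslow : ∀ x : ℝ, 0 < x →
      Filter.Tendsto (fun t => M (t * x) / M t) (nhdsWithin 0 (Set.Ioi 0)) (nhds 1))
    (hasymp : Filter.Tendsto
      (fun x => (∫ y in Set.Ioc (0 : ℝ) x, y ^ 2 ∂ν) / (x ^ ρ * M x))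
      (nhdsWithin 0 (Set.Ioi 0)) (nhds 1)) :
    ∫⁻ y in Set.Ioc (0:ℝ) 1, ENNReal.ofReal y ∂ν < ⊤ := by
  -- constants
  set u : ℝ := (2:ℝ) ^ (ρ - 1) with hu_def
  have hu1 : 1 < u := Real.one_lt_rpow (by norm_num) (by linarith)
  have hu0 : 0 < u := by linarith
  set r : ℝ := Real.sqrt u with hr_def
  have hr1 : 1 < r := by
    rw [hr_def, show (1:ℝ) = Real.sqrt 1 by simp]
    exact Real.sqrt_lt_sqrt (by norm_num) hu1
  have hr0 : 0 < r := by linarith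
  have hrr : r * r = u := Real.mul_self_sqrt hu0.le
  set q : ℝ := r / u with hq_def
  have hq0 : 0 < q := div_pos hr0 hu0
  have hq1 : q < 1 := by
    rw [hq_def, div_lt_one hu0]
    nlinarith
  -- eventual bounds
  obtain ⟨δ₁, hδ₁0, hδ₁⟩ := aux_eventually_Ioc
    ((hMslow (1/2) (by norm_num)).eventually_lt_const hr1)
  obtain ⟨δ₂, hδ₂0, hδ₂⟩ := aux_eventually_Ioc (hasymp.eventually_lt_const (by norm_num : (1:ℝ) < 2))
  set b : ℝ := min 1 (min δ₁ δ₂) with hb_def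
  have hb0 : 0 < b := lt_min (by norm_num) (lt_min hδ₁0 hδ₂0)
  have hb1 : b ≤ 1 := min_le_left _ _
  have hbδ₁ : b ≤ δ₁ := le_trans (min_le_right _ _) (min_le_left _ _)
  have hbδ₂ : b ≤ δ₂ := le_trans (min_le_right _ _) (min_le_right _ _)
  -- the lintegral of y² on Ioc 0 x
  set V : ℝ → ENNReal := fun x => ∫⁻ y in Set.Ioc (0:ℝ) x, ENNReal.ofReal (y ^ 2) ∂ν with hV_def
  have hVle : ∀ x : ℝ, x ≤ 1 → V x ≤ ∫⁻ y, ENNReal.ofReal (min (y ^ 2) 1) ∂ν := by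
    intro x hx
    refine le_trans (setLIntegral_mono (by measurability) ?_) (setLIntegral_le_lintegral _ _)
    intro y hy
    have : y ^ 2 ≤ 1 := by nlinarith [hy.1, hy.2]
    rw [min_eq_left this]
  have hVlt : ∀ x : ℝ, x ≤ 1 → V x < ⊤ := fun x hx => lt_of_le_of_lt (hVle x hx) hν
  have hint : ∀ x : ℝ, x ≤ 1 → IntegrableOn (fun y => y ^ 2) (Set.Ioc (0:ℝ) x) ν := by
    intro x hx
    refine ⟨(measurable_id.pow_const 2).aestronglyMeasurable, ?_⟩
    rw [hasFiniteIntegral_iff_ofReal (Filter.Eventually.of_forall fun y => sq_nonneg y)]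
    exact hVlt x hx
  -- V bound on (0, b]
  have hVb : ∀ x : ℝ, 0 < x → x ≤ b → V x ≤ ENNReal.ofReal (2 * (x ^ ρ * M x)) := by
    intro x hx hxb
    have hd : 0 < x ^ ρ * M x := mul_pos (Real.rpow_pos_of_pos hx ρ) (hMpos x hx)
    have h2 : (∫ y in Set.Ioc (0:ℝ) x, y ^ 2 ∂ν) < 2 * (x ^ ρ * M x) := by
      have := hδ₂ x hx (le_trans hxb hbδ₂)
      rwa [div_lt_iff₀ hd] at this
    have heq : ENNReal.ofReal (∫ y in Set.Ioc (0:ℝ) x, y ^ 2 ∂ν) = V x :=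
      ofReal_integral_eq_lintegral_ofReal (hint x (le_trans hxb hb1))
        (Filter.Eventually.of_forall fun y => sq_nonneg y)
    rw [← heq]
    exact ENNReal.ofReal_le_ofReal h2.le
  -- slow variation bound at dyadic points
  have hM : ∀ n : ℕ, M (b / 2 ^ n) ≤ M b * r ^ n := by
    intro n
    induction n with
    | zero => simp
    | succ n ih =>
      have ht0 : 0 < b / 2 ^ n := div_pos hb0 (by positivity)
      have htb : b / 2 ^ n ≤ b := by
        apply div_le_self hb0.le
        exact one_le_pow₀ (by norm_num)
      have hrat := hδ₁ (b / 2 ^ n) ht0 (le_trans htb hbδ₁)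
      have heq : b / 2 ^ n * (1/2) = b / 2 ^ (n+1) := by
        rw [pow_succ]; ring
      rw [heq, div_lt_iff₀ (hMpos _ ht0)] at hrat
      calc M (b / 2 ^ (n+1)) ≤ r * M (b / 2 ^ n) := hrat.le
        _ ≤ r * (M b * r ^ n) := mul_le_mul_of_nonneg_left ih hr0.le
        _ = M b * r ^ (n+1) := by ring
  -- covering
  classical
  have hcover : Set.Ioc (0:ℝ) b ⊆ ⋃ n : ℕ, Set.Ioc (b / 2 ^ (n+1)) (b / 2 ^ n) := by
    intro y hy
    have hy0 : 0 < y := hy.1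
    have hex : ∃ n : ℕ, b / 2 ^ (n+1) < y := by
      obtain ⟨n, hn⟩ := pow_unbounded_of_one_lt (b / y) (by norm_num : (1:ℝ) < 2)
      refine ⟨n, ?_⟩
      rw [div_lt_iff₀ (by positivity)]
      rw [div_lt_iff₀ hy0] at hn
      have hp : (0:ℝ) < 2 ^ n := by positivity
      calc b < 2 ^ n * y := hn
        _ ≤ y * 2 ^ (n+1) := by rw [pow_succ]; nlinarith
    set n := Nat.find hex with hn_def
    have hlt : b / 2 ^ (n+1) < y := Nat.find_spec hex
    have hub : y ≤ b / 2 ^ n := by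
      rcases Nat.eq_zero_or_eq_succ_pred n with h0 | hs
      · rw [h0]; simpa using hy.2
      · rw [hs]
        have hm : n - 1 < n := by omega
        have hmin := Nat.find_min hex (hn_def ▸ hm)
        simpa [Nat.succ_eq_add_one, Nat.pred_eq_sub_one] using le_of_not_gt hmin
    exact Set.mem_iUnion.2 ⟨n, hlt, hub⟩
  -- per-piece bound
  have hterm : ∀ n : ℕ, (∫⁻ y in Set.Ioc (b / 2 ^ (n+1)) (b / 2 ^ n), ENNReal.ofReal y ∂ν)
      ≤ ENNReal.ofReal (4 * b ^ (ρ-1) * M b) * (ENNReal.ofReal q) ^ n := by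
    intro n
    set t : ℝ := b / 2 ^ n with ht_def
    have ht0 : 0 < t := div_pos hb0 (by positivity)
    have htb : t ≤ b := div_le_self hb0.le (one_le_pow₀ (by norm_num))
    have hhalf : b / 2 ^ (n+1) = t / 2 := by rw [ht_def, pow_succ]; ring
    have step1 : (∫⁻ y in Set.Ioc (t/2) t, ENNReal.ofReal y ∂ν)
        ≤ ENNReal.ofReal (2 / t) * V t := by
      calc (∫⁻ y in Set.Ioc (t/2) t, ENNReal.ofReal y ∂ν)
          ≤ ∫⁻ y in Set.Ioc (t/2) t, ENNReal.ofReal (2 / t) * ENNReal.ofReal (y ^ 2) ∂ν := by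
            apply setLIntegral_mono (by measurability)
            intro y hy
            rw [← ENNReal.ofReal_mul (by positivity)]
            apply ENNReal.ofReal_le_ofReal
            have h1 : t / 2 < y := hy.1
            rw [div_mul_eq_mul_div, le_div_iff₀ ht0]
            nlinarith
        _ = ENNReal.ofReal (2 / t) * ∫⁻ y in Set.Ioc (t/2) t, ENNReal.ofReal (y ^ 2) ∂ν :=
            lintegral_const_mul' _ _ ENNReal.ofReal_ne_top
        _ ≤ ENNReal.ofReal (2 / t) * V t := by
            gcongr
            exact lintegral_mono_set (fun y hy => ⟨lt_trans (half_pos ht0) hy.1, hy.2⟩)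
    have step2 : ENNReal.ofReal (2 / t) * V t ≤ ENNReal.ofReal (4 * (t ^ (ρ-1) * M t)) := by
      calc ENNReal.ofReal (2 / t) * V t
          ≤ ENNReal.ofReal (2 / t) * ENNReal.ofReal (2 * (t ^ ρ * M t)) := by
            gcongr
            exact hVb t ht0 htb
        _ = ENNReal.ofReal ((2 / t) * (2 * (t ^ ρ * M t))) :=
            (ENNReal.ofReal_mul (by positivity)).symm
        _ = ENNReal.ofReal (4 * (t ^ (ρ-1) * M t)) := by
            congr 1
            have hts : t ^ ρ = t ^ (ρ - 1) * t := by
              rw [← Real.rpow_add_one (ne_of_gt ht0)]; ring_nf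
            rw [hts]; field_simp; ring
    have step3 : 4 * (t ^ (ρ-1) * M t) ≤ (4 * b ^ (ρ-1) * M b) * q ^ n := by
      have htpow : t ^ (ρ-1) = b ^ (ρ-1) * (u⁻¹) ^ n := by
        have h2 : t = b * ((2:ℝ)⁻¹) ^ n := by rw [ht_def]; field_simp; rw [← mul_pow]; norm_num
        rw [h2, Real.mul_rpow hb0.le (by positivity)]
        congr 1
        rw [← Real.rpow_natCast ((2:ℝ)⁻¹) n, ← Real.rpow_mul (by norm_num),
          mul_comm (n:ℝ) (ρ-1), Real.rpow_mul (by norm_num), Real.rpow_natCast]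
        congr 1
        rw [Real.inv_rpow (by norm_num), hu_def]
      have hMn : M t ≤ M b * r ^ n := hM n
      have hnn : (0:ℝ) ≤ t ^ (ρ-1) := (Real.rpow_pos_of_pos ht0 _).le
      calc 4 * (t ^ (ρ-1) * M t) ≤ 4 * (t ^ (ρ-1) * (M b * r ^ n)) := by
            apply mul_le_mul_of_nonneg_left _ (by norm_num)
            exact mul_le_mul_of_nonneg_left hMn hnn
        _ = (4 * b ^ (ρ-1) * M b) * ((u⁻¹) ^ n * r ^ n) := by rw [htpow]; ring
        _ = (4 * b ^ (ρ-1) * M b) * q ^ n := by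
            rw [← mul_pow, hq_def, div_eq_inv_mul]
    calc (∫⁻ y in Set.Ioc (b / 2 ^ (n+1)) (b / 2 ^ n), ENNReal.ofReal y ∂ν)
        = (∫⁻ y in Set.Ioc (t/2) t, ENNReal.ofReal y ∂ν) := by rw [hhalf]
      _ ≤ ENNReal.ofReal (4 * (t ^ (ρ-1) * M t)) := le_trans step1 step2
      _ ≤ ENNReal.ofReal ((4 * b ^ (ρ-1) * M b) * q ^ n) := ENNReal.ofReal_le_ofReal step3
      _ = ENNReal.ofReal (4 * b ^ (ρ-1) * M b) * (ENNReal.ofReal q) ^ n := by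
          rw [ENNReal.ofReal_mul (mul_nonneg (by positivity) (hMpos b hb0).le),
            ENNReal.ofReal_pow hq0.le]
  -- main piece finite
  have hmain : (∫⁻ y in Set.Ioc (0:ℝ) b, ENNReal.ofReal y ∂ν) < ⊤ := by
    calc (∫⁻ y in Set.Ioc (0:ℝ) b, ENNReal.ofReal y ∂ν)
        ≤ ∫⁻ y in ⋃ n : ℕ, Set.Ioc (b / 2 ^ (n+1)) (b / 2 ^ n), ENNReal.ofReal y ∂ν :=
          lintegral_mono_set hcover
      _ ≤ ∑' n : ℕ, ∫⁻ y in Set.Ioc (b / 2 ^ (n+1)) (b / 2 ^ n), ENNReal.ofReal y ∂ν :=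
          lintegral_iUnion_le _ _
      _ ≤ ∑' n : ℕ, ENNReal.ofReal (4 * b ^ (ρ-1) * M b) * (ENNReal.ofReal q) ^ n :=
          ENNReal.tsum_le_tsum hterm
      _ = ENNReal.ofReal (4 * b ^ (ρ-1) * M b) * (1 - ENNReal.ofReal q)⁻¹ := by
          rw [ENNReal.tsum_mul_left, ENNReal.tsum_geometric]
      _ < ⊤ := by
          apply ENNReal.mul_lt_top ENNReal.ofReal_lt_top
          rw [ENNReal.inv_lt_top, tsub_pos_iff_lt]
          exact ENNReal.ofReal_lt_one.2 hq1
  -- tail piece finite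
  have htail1 : (∫⁻ y in Set.Ioc b 1, ENNReal.ofReal y ∂ν) < ⊤ := by
    calc (∫⁻ y in Set.Ioc b 1, ENNReal.ofReal y ∂ν)
        ≤ ∫⁻ y in Set.Ioc b 1, ENNReal.ofReal b⁻¹ * ENNReal.ofReal (min (y ^ 2) 1) ∂ν := by
          apply setLIntegral_mono (by measurability)
          intro y hy
          rw [← ENNReal.ofReal_mul (by positivity)]
          apply ENNReal.ofReal_le_ofReal
          have h1 : b < y := hy.1
          have h2 : y ≤ 1 := hy.2
          have hmin : min (y ^ 2) 1 = y ^ 2 := min_eq_left (by nlinarith)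
          rw [hmin, inv_mul_eq_div, le_div_iff₀ hb0]
          nlinarith
      _ = ENNReal.ofReal b⁻¹ * ∫⁻ y in Set.Ioc b 1, ENNReal.ofReal (min (y ^ 2) 1) ∂ν :=
          lintegral_const_mul' _ _ ENNReal.ofReal_ne_top
      _ ≤ ENNReal.ofReal b⁻¹ * ∫⁻ y, ENNReal.ofReal (min (y ^ 2) 1) ∂ν := by
          gcongr
          exact Measure.restrict_le_self
      _ < ⊤ := ENNReal.mul_lt_top ENNReal.ofReal_lt_top hν
  calc ∫⁻ y in Set.Ioc (0:ℝ) 1, ENNReal.ofReal y ∂ν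
      ≤ ∫⁻ y in Set.Ioc (0:ℝ) b ∪ Set.Ioc b 1, ENNReal.ofReal y ∂ν := by
        apply lintegral_mono_set
        rw [Set.Ioc_union_Ioc_eq_Ioc hb0.le hb1]
    _ ≤ (∫⁻ y in Set.Ioc (0:ℝ) b, ENNReal.ofReal y ∂ν)
        + ∫⁻ y in Set.Ioc b 1, ENNReal.ofReal y ∂ν := lintegral_union_le _ _ _
    _ < ⊤ := ENNReal.add_lt_top.2 ⟨hmain, htail1⟩

open Filter Set in
/-- If `∫_{(0,x]} y² ν(dy) ∼ x^ρ M(x)` as `x → 0⁺` with `ρ > 1` and `M` slowly varying at `0`,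
then `limsup_{z→∞} (ln z − c J′(z)) = +∞` for every `c > 0`. -/
theorem jprime_limsup_top_of_rho_gt_one (ν : Measure ℝ) (a q : ℝ) (hq : 0 ≤ q)
    (hν : ∫⁻ y, ENNReal.ofReal (min (y ^ 2) 1) ∂ν < ⊤)
    (hq0 : q = 0)
    (hsupp : measureSupport ν ⊆ Set.Ici 0)
    (htail : IntegrableOn (fun y => y) (Set.Ici 1) ν)
    (ρ : ℝ) (hρ : 1 < ρ)
    (M : ℝ → ℝ) (hMpos : ∀ x : ℝ, 0 < x → 0 < M x)
    (hMslow : ∀ x : ℝ, 0 < x →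
      Filter.Tendsto (fun t => M (t * x) / M t) (nhdsWithin 0 (Set.Ioi 0)) (nhds 1))
    (hasymp : Filter.Tendsto
      (fun x => (∫ y in Set.Ioc (0 : ℝ) x, y ^ 2 ∂ν) / (x ^ ρ * M x))
      (nhdsWithin 0 (Set.Ioi 0)) (nhds 1)) :
    ∀ c : ℝ, 0 < c →
      Filter.limsup (fun z : ℝ => ((Real.log z - c * Jprime ν a q z : ℝ) : EReal))
        Filter.atTop = ⊤ := by
  have hnull := aux_null_Iio ν hsupp
  have hae : ∀ᵐ y ∂ν, 0 ≤ y := by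
    rw [ae_iff]
    convert hnull using 2
    ext y
    simp [not_le]
  -- the dominating function
  set g : ℝ → ℝ := (Set.Ioc (0:ℝ) 1).indicator (fun y => y) with hg_def
  have hgint : Integrable g ν := by
    rw [hg_def, integrable_indicator_iff measurableSet_Ioc]
    refine ⟨measurable_id.aestronglyMeasurable, (hasFiniteIntegral_iff_ofReal
      ((ae_restrict_mem measurableSet_Ioc).mono fun y hy => hy.1.le)).2 ?_⟩
    exact aux_finite_lint ν hν ρ hρ M hMpos hMslow hasymp
  set B : ℝ := max 0 (∫ y, g y ∂ν) with hB_def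
  have hJ : ∀ z : ℝ, Jprime ν a q z ≤ -a + B := by
    intro z
    rw [Jprime, hq0, zero_mul, add_zero]
    have hgoal : (∫ y, y * ((Set.Ioo (-1 : ℝ) 1).indicator 1 y - Real.exp (-(z * y))) ∂ν) ≤ B := by
      by_cases hi : Integrable
        (fun y => y * ((Set.Ioo (-1 : ℝ) 1).indicator 1 y - Real.exp (-(z * y)))) ν
      · refine le_trans (integral_mono_ae hi hgint ?_) (le_max_right _ _)
        refine hae.mono fun y hy => ?_
        have hexp : 0 ≤ y * Real.exp (-(z * y)) := mul_nonneg hy (Real.exp_pos _).le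
        have h1 : y * ((Set.Ioo (-1 : ℝ) 1).indicator 1 y - Real.exp (-(z * y)))
            ≤ y * (Set.Ioo (-1 : ℝ) 1).indicator 1 y := by nlinarith
        refine le_trans h1 ?_
        by_cases hy1 : y ∈ Set.Ioo (-1 : ℝ) 1
        · rw [Set.indicator_of_mem hy1, Pi.one_apply, mul_one]
          rcases eq_or_lt_of_le hy with h0 | h0
          · simp [hg_def, ← h0]
          · have hmem : y ∈ Set.Ioc (0:ℝ) 1 := Set.mem_Ioc.mpr ⟨h0, hy1.2.le⟩
            rw [hg_def, Set.indicator_of_mem hmem]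
        · rw [Set.indicator_of_notMem hy1, mul_zero]
          exact Set.indicator_nonneg (fun y hy => hy.1.le) y
      · rw [integral_undef hi]
        exact le_max_left _ _
    linarith
  intro c hc
  have hT : Tendsto (fun z : ℝ => Real.log z - c * Jprime ν a q z) atTop atTop := by
    apply tendsto_atTop_mono (f := fun z : ℝ => Real.log z - c * (-a + B))
    · intro z
      have := hJ z
      have : c * Jprime ν a q z ≤ c * (-a + B) := mul_le_mul_of_nonneg_left this hc.le
      linarith
    · exact tendsto_atTop_add_const_right atTop _ Real.tendsto_log_atTop
  apply Filter.Tendsto.limsup_eq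
  rw [EReal.tendsto_nhds_top_iff_real]
  intro x
  filter_upwards [hT.eventually_ge_atTop (x + 1)] with z hz
  exact_mod_cast lt_of_lt_of_le (by linarith : x < x + 1) hz
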